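/- The relation 'exclusion from below' ▷ is transitive in the menu-item sense: if X ▷ x, Y ▷ y, and x ∈ Y, then (X ∪ Y) \ {x, y} ▷ y. -/
import Mathlib


open Finset

/-- A total (weak) order: complete, transitive, antisymmetric. -/
def TotalOrderRel {α : Type*} (r : α → α → Prop) : Prop :=
  (∀ a b : α, r a b ∨ r b a) ∧ Transitive r ∧ ∀ a b : α, r a b → r b a → a = b

/-- The set of `r`-maximal elements of a set `S`. -/
def argmaxOn {α : Type*} (r : α → α → Prop) (S : Set α) : Set α :=
  {x ∈ S | ∀ y ∈ S, r x y}

/-- The justifiable set `M(A)`: union over justifications of their maximizers on `A`. -/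
def justSet {α : Type*} (M : Set (α → α → Prop)) (A : Finset α) : Set α :=
  ⋃ r ∈ M, argmaxOn r (A : Set α)

/-- A justifiability representation for `(pref, c)`. -/
def JustRep {α : Type*} (pref : α → α → Prop) (c : Finset α → Finset α)
    (M : Set (α → α → Prop)) : Prop :=
  M.Nonempty ∧ (∀ r ∈ M, TotalOrderRel r) ∧
    ∀ A : Finset α, A.Nonempty → (c A : Set α) = argmaxOn pref (justSet M A)

/-- Irrelevance of Unjustifiable Alternatives. -/
def IUA {α : Type*} [DecidableEq α] (pref : α → α → Prop)
    (c : Finset α → Finset α) : Prop :=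
  ∀ (A : Finset α) (a : α), a ∈ A → (∀ b ∈ c A, pref a b) → a ∉ c A →
    ∀ B : Finset α, A ⊆ B → c (B.erase a) = c B

/-- Optimization: all chosen elements are indifferent. -/
def Optimization {α : Type*} (pref : α → α → Prop) (c : Finset α → Finset α) : Prop :=
  ∀ A : Finset α, A.Nonempty → ∀ a ∈ c A, ∀ b ∈ c A, pref a b ∧ pref b a

/-- `A` excludes `b` from below: `b ∉ c(A ∪ {b})` and `b ≿ a` for all `a ∈ A`. -/
def ExclBelow {α : Type*} [DecidableEq α] (pref : α → α → Prop)
    (c : Finset α → Finset α) (A : Finset α) (b : α) : Prop :=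
  b ∉ c (insert b A) ∧ ∀ x ∈ A, pref b x

/-- exclusion from below is transitive in the menu-item sense. -/
theorem exclBelow_trans {α : Type*} [DecidableEq α] (pref : α → α → Prop)
    (c : Finset α → Finset α)
    (hcomp : ∀ a b : α, pref a b ∨ pref b a) (htrans : Transitive pref)
    (hsub : ∀ A : Finset α, c A ⊆ A)
    (hne : ∀ A : Finset α, A.Nonempty → (c A).Nonempty)
    (hIUA : IUA pref c)
    (X Y : Finset α) (x y : α) (hxX : x ∉ X) (hyY : y ∉ Y)
    (hX : ExclBelow pref c X x) (hY : ExclBelow pref c Y y) (hxY : x ∈ Y) :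
    ExclBelow pref c ((X ∪ Y) \ {x, y}) y := by
  have hyx : y ≠ x := fun h => hyY (h ▸ hxY)
  set B := insert y (X ∪ Y) with hB
  have hXsub : insert x X ⊆ B := by
    intro a ha
    simp only [hB, Finset.mem_insert, Finset.mem_union] at ha ⊢
    rcases ha with rfl | ha
    · exact Or.inr (Or.inr hxY)
    · exact Or.inr (Or.inl ha)
  have hx1 : ∀ b ∈ c (insert x X), pref x b := by
    intro b hb
    rcases Finset.mem_insert.mp (hsub _ hb) with rfl | hbX
    · exact absurd hb hX.1
    · exact hX.2 b hbX
  have hEx : c (B.erase x) = c B :=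
    hIUA (insert x X) x (Finset.mem_insert_self _ _) hx1 hX.1 B hXsub
  have hYsub : insert y Y ⊆ B := by
    intro a ha
    simp only [hB, Finset.mem_insert, Finset.mem_union] at ha ⊢
    rcases ha with rfl | ha
    · exact Or.inl rfl
    · exact Or.inr (Or.inr ha)
  have hy1 : ∀ b ∈ c (insert y Y), pref y b := by
    intro b hb
    rcases Finset.mem_insert.mp (hsub _ hb) with rfl | hbY
    · exact absurd hb hY.1
    · exact hY.2 b hbY
  have hEy : c (B.erase y) = c B :=
    hIUA (insert y Y) y (Finset.mem_insert_self _ _) hy1 hY.1 B hYsub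
  have hyB : y ∉ c B := by
    intro h
    exact (Finset.notMem_erase y B) (hsub _ (hEy ▸ h))
  have hset : insert y ((X ∪ Y) \ {x, y}) = B.erase x := by
    ext a
    simp only [hB, Finset.mem_insert, Finset.mem_erase, Finset.mem_sdiff,
      Finset.mem_union]
    constructor
    · rintro (rfl | ⟨ha, hax⟩)
      · exact ⟨hyx, Or.inl rfl⟩
      · simp only [Finset.mem_insert, Finset.mem_singleton] at hax
        push_neg at hax
        exact ⟨hax.1, Or.inr ha⟩
    · rintro ⟨hax, rfl | ha⟩
      · exact Or.inl rfl
      · by_cases h : a = y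
        · exact Or.inl h
        · refine Or.inr ⟨ha, ?_⟩
          simp only [Finset.mem_insert, Finset.mem_singleton]
          push_neg
          exact ⟨hax, h⟩
  constructor
  · rw [hset, hEx]; exact hyB
  · intro a ha
    rw [Finset.mem_sdiff, Finset.mem_union] at ha
    rcases ha.1 with haX | haY
    · exact htrans (hY.2 x hxY) (hX.2 a haX)
    · exact hY.2 a haY
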